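/- Let φ : ℝ → ℝ be continuous on (-2,0) and let h : ℝ × ℝ → ℝ be such that on (0,∞) × (-2,0) it is twice differentiable in its first (spatial) argument, differentiable in its second (time) argument, and satisfies the forced 1D heat equation ∂_t h(x,t) - ∂_{xx} h(x,t) = φ(t). Define u : ℝ³ × ℝ → ℝ³ by u(x,t) := (h(x₃,t), 0, 0) and p(x,t) := -φ(t)·x₁. Then at every point (x,t) with x₃ > 0 and t ∈ (-2,0): div u = 0, the convective term (u·∇)u vanishes identically, and ∂_t u - Δu + (u·∇)u + ∇p = 0; in particular (u,p) is a classical solution of both the Stokes and the Navier–Stokes systems in ℝ³₊ × (-2,0), where ℝ³₊ := {x ∈ ℝ³ : x₃ > 0}. -/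
import Mathlib


open Set

noncomputable section

/-- ℝ³ as a Euclidean space. -/
abbrev E3 := EuclideanSpace ℝ (Fin 3)

/-- Spatial partial derivative `∂ᵢ f` at `x`. -/
def pd (i : Fin 3) (f : E3 → ℝ) (x : E3) : ℝ :=
  fderiv ℝ f x (EuclideanSpace.single i 1)

/-- Spatial Laplacian. -/
def lap (f : E3 → ℝ) (x : E3) : ℝ := ∑ i, pd i (fun y => pd i f y) x

lemma pd_coord (g : ℝ → ℝ) (j : Fin 3) (x : E3) (i : Fin 3) :
    pd i (fun y => g (y j)) x = if i = j then deriv g (x j) else 0 := by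
  by_cases hg : DifferentiableAt ℝ g (x j)
  · have hπ : HasFDerivAt (fun y : E3 => y j) (EuclideanSpace.proj j : E3 →L[ℝ] ℝ) x :=
      (EuclideanSpace.proj j (𝕜 := ℝ)).hasFDerivAt
    have hc := (hg.hasFDerivAt.comp x hπ)
    have hc2 : HasFDerivAt (fun y : E3 => g (y j))
        ((fderiv ℝ g (x j)).comp (EuclideanSpace.proj j)) x := hc
    rw [pd, hc2.fderiv]
    simp only [ContinuousLinearMap.coe_comp', Function.comp_apply,
      EuclideanSpace.single_apply]
    by_cases hij : i = j
    · subst hij; simp [fderiv_apply_one_eq_deriv]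
    · have : ¬ (j = i) := fun e => hij e.symm
      simp [this, hij]
  · have hf : ¬ DifferentiableAt ℝ (fun y : E3 => g (y j)) x := by
      intro hf
      apply hg
      have hι : DifferentiableAt ℝ
          (fun z : ℝ => x + (z - x j) • EuclideanSpace.single j (1:ℝ)) (x j) := by
        apply (differentiableAt_const x).add
        exact ((differentiableAt_id.sub_const _).smul_const _)
      have heq : g = (fun y : E3 => g (y j)) ∘
          (fun z : ℝ => x + (z - x j) • EuclideanSpace.single j (1:ℝ)) := by
        funext z
        simp [Function.comp, EuclideanSpace.single_apply]
      have hιx : (fun z : ℝ => x + (z - x j) • EuclideanSpace.single j (1:ℝ)) (x j) = x := by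
        simp
      rw [heq]
      exact (hιx ▸ hf).comp (x j) hι
    rw [pd, fderiv_zero_of_not_differentiableAt hf,
      deriv_zero_of_not_differentiableAt hg]
    simp

lemma pd_const (c : ℝ) (i : Fin 3) (x : E3) : pd i (fun _ => c) x = 0 := by
  simp [pd]

lemma lap_const (c : ℝ) (x : E3) : lap (fun _ => c) x = 0 := by
  rw [lap]
  apply Finset.sum_eq_zero
  intro i _
  have e : (fun y : E3 => pd i (fun _ : E3 => c) y) = fun _ : E3 => (0:ℝ) :=
    funext (fun y => pd_const c i y)
  rw [e, pd_const]

/-- The shear flow `u(x,t) = (h(x₃,t),0,0)`, `p(x,t) = -φ(t) x₁`, built from a solution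
`h` of the forced 1D heat equation `∂ₜ h - ∂ₓₓ h = φ(t)` on `(0,∞) × (-2,0)`, is a
classical solution of both the Stokes and the Navier–Stokes systems in
`ℝ³₊ × (-2,0)`; in particular `div u = 0` and the convective term vanishes. -/
theorem shear_flow_solves_navier_stokes
    (φ : ℝ → ℝ) (h : ℝ → ℝ → ℝ)
    (hφ : ContinuousOn φ (Ioo (-2 : ℝ) 0))
    (hdiff : ∀ x : ℝ, 0 < x → ∀ t ∈ Ioo (-2 : ℝ) 0,
      DifferentiableAt ℝ (fun y => h y t) x ∧
      DifferentiableAt ℝ (fun y => deriv (fun y' => h y' t) y) x ∧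
      DifferentiableAt ℝ (fun s => h x s) t)
    (hheat : ∀ x : ℝ, 0 < x → ∀ t ∈ Ioo (-2 : ℝ) 0,
      deriv (fun s => h x s) t - deriv (fun y => deriv (fun y' => h y' t) y) x = φ t)
    (u : E3 → ℝ → Fin 3 → ℝ) (p : E3 → ℝ → ℝ)
    (hu : ∀ (x : E3) (t : ℝ), u x t = ![h (x 2) t, 0, 0])
    (hp : ∀ (x : E3) (t : ℝ), p x t = -(φ t) * x 0) :
    ∀ (x : E3), 0 < x 2 → ∀ t ∈ Ioo (-2 : ℝ) 0,
      -- incompressibility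
      ((∑ i, pd i (fun y => u y t i) x) = 0) ∧
      -- the convective term vanishes identically
      (∀ i : Fin 3, (∑ j, u x t j * pd j (fun y => u y t i) x) = 0) ∧
      -- the Navier–Stokes equations hold
      (∀ i : Fin 3,
        deriv (fun s => u x s i) t - lap (fun y => u y t i) x
          + (∑ j, u x t j * pd j (fun y => u y t i) x)
          + pd i (fun y => p y t) x = 0) ∧
      -- the Stokes equations hold
      (∀ i : Fin 3,
        deriv (fun s => u x s i) t - lap (fun y => u y t i) x
          + pd i (fun y => p y t) x = 0) := by
  intro x hx t ht
  -- component functions of u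
  have hu0 : (fun y : E3 => u y t 0) = fun y : E3 => (fun y' => h y' t) (y 2) := by
    funext y; rw [hu]; simp
  have hu1 : (fun y : E3 => u y t 1) = fun _ : E3 => (0:ℝ) := by
    funext y; rw [hu]; simp
  have hu2 : (fun y : E3 => u y t 2) = fun _ : E3 => (0:ℝ) := by
    funext y; rw [hu]; simp
  -- pd of components
  have key0 : ∀ i, pd i (fun y => u y t 0) x
      = if i = 2 then deriv (fun y' => h y' t) (x 2) else 0 := by
    intro i; rw [hu0]; exact pd_coord (fun y' => h y' t) 2 x i
  have key1 : ∀ i, pd i (fun y => u y t 1) x = 0 := by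
    intro i; rw [hu1]; exact pd_const 0 i x
  have key2 : ∀ i, pd i (fun y => u y t 2) x = 0 := by
    intro i; rw [hu2]; exact pd_const 0 i x
  have pd00 : pd 0 (fun y => u y t 0) x = 0 := by
    rw [key0 0, if_neg (by decide)]
  -- u at the point
  have hux1 : u x t 1 = 0 := by rw [hu]; simp
  have hux2 : u x t 2 = 0 := by rw [hu]; simp
  -- convective term vanishes
  have hconv : ∀ i : Fin 3, (∑ j, u x t j * pd j (fun y => u y t i) x) = 0 := by
    intro i
    rw [Fin.sum_univ_three, hux1, hux2]
    fin_cases i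
    · show u x t 0 * pd 0 (fun y => u y t 0) x + 0 * pd 1 (fun y => u y t 0) x
        + 0 * pd 2 (fun y => u y t 0) x = 0
      rw [pd00]; ring
    · show u x t 0 * pd 0 (fun y => u y t 1) x + 0 * pd 1 (fun y => u y t 1) x
        + 0 * pd 2 (fun y => u y t 1) x = 0
      rw [key1 0]; ring
    · show u x t 0 * pd 0 (fun y => u y t 2) x + 0 * pd 1 (fun y => u y t 2) x
        + 0 * pd 2 (fun y => u y t 2) x = 0
      rw [key2 0]; ring
  -- divergence vanishes
  have hdiv : (∑ i, pd i (fun y => u y t i) x) = 0 := by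
    rw [Fin.sum_univ_three, pd00, key1 1, key2 2]
    ring
  -- Laplacian of the first component
  have hlap0 : lap (fun y => u y t 0) x
      = deriv (fun y => deriv (fun y' => h y' t) y) (x 2) := by
    rw [lap, Fin.sum_univ_three]
    have e : ∀ i : Fin 3, (fun y : E3 => pd i (fun y' => u y' t 0) y)
        = fun y : E3 => if i = 2 then deriv (fun y' => h y' t) (y 2) else 0 := by
      intro i; funext y; rw [hu0]; exact pd_coord (fun y' => h y' t) 2 y i
    have e0 : (fun y : E3 => pd 0 (fun y' => u y' t 0) y) = fun _ : E3 => (0:ℝ) := by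
      rw [e 0]; funext y; rw [if_neg (by decide)]
    have e1 : (fun y : E3 => pd 1 (fun y' => u y' t 0) y) = fun _ : E3 => (0:ℝ) := by
      rw [e 1]; funext y; rw [if_neg (by decide)]
    have e2 : (fun y : E3 => pd 2 (fun y' => u y' t 0) y)
        = fun y : E3 => (fun z => deriv (fun y' => h y' t) z) (y 2) := by
      rw [e 2]; funext y; rw [if_pos rfl]
    rw [e0, e1, e2, pd_const, pd_const,
      pd_coord (fun z => deriv (fun y' => h y' t) z) 2 x 2, if_pos rfl]
    ring
  -- Laplacians of the zero components
  have hlap1 : lap (fun y => u y t 1) x = 0 := by rw [hu1]; exact lap_const 0 x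
  have hlap2 : lap (fun y => u y t 2) x = 0 := by rw [hu2]; exact lap_const 0 x
  -- time derivatives
  have ht0 : deriv (fun s => u x s 0) t = deriv (fun s => h (x 2) s) t := by
    congr 1; funext s; rw [hu]; simp
  have ht1 : deriv (fun s => u x s 1) t = 0 := by
    have e : (fun s => u x s 1) = fun _ : ℝ => (0:ℝ) := by
      funext s; rw [hu]; simp
    rw [e, deriv_const]
  have ht2 : deriv (fun s => u x s 2) t = 0 := by
    have e : (fun s => u x s 2) = fun _ : ℝ => (0:ℝ) := by
      funext s; rw [hu]; simp
    rw [e, deriv_const]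
  -- pressure gradient
  have hpfun : (fun y : E3 => p y t) = fun y : E3 => (fun z => -(φ t) * z) (y 0) := by
    funext y; rw [hp]
  have hpd : ∀ i : Fin 3, pd i (fun y => p y t) x = if i = 0 then -(φ t) else 0 := by
    intro i
    rw [hpfun, pd_coord (fun z => -(φ t) * z) 0 x i]
    have e : deriv (fun z => -(φ t) * z) (x 0) = -(φ t) := by
      rw [deriv_const_mul_field]; simp
    rw [e]
  -- the heat equation
  have hh := hheat (x 2) hx t ht
  -- Stokes component equations
  have stokes0 : deriv (fun s => u x s 0) t - lap (fun y => u y t 0) x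
      + pd 0 (fun y => p y t) x = 0 := by
    rw [ht0, hlap0, hpd 0, if_pos rfl]; linarith
  have stokes1 : deriv (fun s => u x s 1) t - lap (fun y => u y t 1) x
      + pd 1 (fun y => p y t) x = 0 := by
    rw [ht1, hlap1, hpd 1, if_neg (by decide)]; ring
  have stokes2 : deriv (fun s => u x s 2) t - lap (fun y => u y t 2) x
      + pd 2 (fun y => p y t) x = 0 := by
    rw [ht2, hlap2, hpd 2, if_neg (by decide)]; ring
  refine ⟨hdiv, hconv, ?_, ?_⟩
  · intro i
    rw [hconv i, add_zero]
    fin_cases i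
    · exact stokes0
    · exact stokes1
    · exact stokes2
  · intro i
    fin_cases i
    · exact stokes0
    · exact stokes1
    · exact stokes2
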